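/- Let v ∈ ℝ^N with N = 2^n, v_j = (1/√2)^n for all j (the uniform superposition amplitudes). Apply successively, for i = N−1 down to 1, the two-level transformation acting on coordinates (0, i) by the matrix [[cos θ, sin θ],[sin θ, −cos θ]]. Then the resulting vector has 0-th coordinate equal to (1/√2)^n · (cos^(N−1)(θ) + Σ_{i=0}^{N−2} cos^i(θ)·sin(θ)). -/

import Mathlib

open Real Finset

open Fin.NatCast in
/-- The two-level transformation on `ℝ^(2^n)` acting on coordinates `(0, i)` by the
matrix `[[cos θ, sin θ], [sin θ, -cos θ]]`, leaving all other coordinates fixed. -/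
noncomputable def twoLevelBias (θ : ℝ) (n : ℕ) (i : ℕ) (v : Fin (2 ^ n) → ℝ) : Fin (2 ^ n) → ℝ :=
  haveI : NeZero (2 ^ n) := ⟨pow_ne_zero n two_ne_zero⟩
  fun j =>
    if j = (0 : Fin (2 ^ n)) then
      Real.cos θ * v 0 + Real.sin θ * v (i : Fin (2 ^ n))
    else if j = (i : Fin (2 ^ n)) then
      Real.sin θ * v 0 - Real.cos θ * v (i : Fin (2 ^ n))
    else v j

/-- Apply successively the two-level bias transformations on coordinates `(0, i)` for
`i = k, k-1, …, 1`. -/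
noncomputable def applyBiasGates (θ : ℝ) (n : ℕ) : ℕ → (Fin (2 ^ n) → ℝ) → (Fin (2 ^ n) → ℝ)
  | 0, v => v
  | k + 1, v => applyBiasGates θ n k (twoLevelBias θ n (k + 1) v)

open Fin.NatCast in
lemma applyBiasGates_key (θ : ℝ) (n : ℕ) (c : ℝ) :
    ∀ (k : ℕ), k < 2 ^ n → ∀ (a : ℝ) (v : Fin (2 ^ n) → ℝ),
      haveI : NeZero (2 ^ n) := ⟨pow_ne_zero n two_ne_zero⟩
      v 0 = a → (∀ i : ℕ, 1 ≤ i → i ≤ k → v (i : Fin (2 ^ n)) = c) →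
      applyBiasGates θ n k v 0 =
        Real.cos θ ^ k * a + (∑ j ∈ Finset.range k, Real.cos θ ^ j) * Real.sin θ * c := by
  haveI : NeZero (2 ^ n) := ⟨pow_ne_zero n two_ne_zero⟩
  intro k
  induction k with
  | zero =>
    intro _ a v h0 _
    simp [applyBiasGates, h0]
  | succ k ih =>
    intro hk a v h0 hv
    have hklt : k < 2 ^ n := Nat.lt_of_succ_lt hk
    have hcast : ∀ m : ℕ, m < 2 ^ n → ((m : Fin (2 ^ n)) : ℕ) = m := by
      intro m hm
      simp [Fin.val_natCast, Nat.mod_eq_of_lt hm]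
    have hne0 : ((k + 1 : ℕ) : Fin (2 ^ n)) ≠ 0 := by
      intro h
      have := congrArg Fin.val h
      rw [hcast (k + 1) hk] at this
      simp at this
    rw [show applyBiasGates θ n (k + 1) v =
        applyBiasGates θ n k (twoLevelBias θ n (k + 1) v) from rfl]
    rw [ih hklt (Real.cos θ * a + Real.sin θ * c) (twoLevelBias θ n (k + 1) v)
      (by
        have hvk : v ((k + 1 : ℕ) : Fin (2 ^ n)) = c :=
          hv (k + 1) (Nat.le_add_left 1 k) le_rfl
        push_cast at hvk
        simp [twoLevelBias, h0, hvk])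
      (by
        intro i hi1 hik
        have hilt : i < 2 ^ n := lt_of_le_of_lt (le_trans hik (Nat.le_succ k)) hk
        have hne0' : ((i : ℕ) : Fin (2 ^ n)) ≠ 0 := by
          intro h
          have := congrArg Fin.val h
          rw [hcast i hilt] at this
          simp at this
          omega
        have hnek : ((i : ℕ) : Fin (2 ^ n)) ≠ ((k + 1 : ℕ) : Fin (2 ^ n)) := by
          intro h
          have := congrArg Fin.val h
          rw [hcast i hilt, hcast (k + 1) hk] at this
          omega
        simp only [twoLevelBias, if_neg hne0', if_neg hnek]
        exact hv i hi1 (le_trans hik (Nat.le_succ k)))]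
    rw [Finset.sum_range_succ]
    ring

theorem stmt_7 (n : ℕ) (θ : ℝ) :
    haveI : NeZero (2 ^ n) := ⟨pow_ne_zero n two_ne_zero⟩
    applyBiasGates θ n (2 ^ n - 1) (fun _ => (1 / Real.sqrt 2) ^ n) 0 =
      (1 / Real.sqrt 2) ^ n *
        (Real.cos θ ^ (2 ^ n - 1) +
          ∑ i ∈ Finset.range (2 ^ n - 1), Real.cos θ ^ i * Real.sin θ) := by
  haveI : NeZero (2 ^ n) := ⟨pow_ne_zero n two_ne_zero⟩
  have hlt : 2 ^ n - 1 < 2 ^ n := by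
    have : 0 < 2 ^ n := Nat.pow_pos (n := n) (by norm_num)
    omega
  rw [applyBiasGates_key θ n ((1 / Real.sqrt 2) ^ n) (2 ^ n - 1) hlt
    ((1 / Real.sqrt 2) ^ n) _ rfl (fun _ _ _ => rfl)]
  rw [Finset.sum_mul, Finset.sum_mul, mul_add, Finset.mul_sum]
  congr 1
  · ring
  · exact Finset.sum_congr rfl fun i _ => by ring
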